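/- Let n ≥ 2 be an integer, let ν ∈ ℝ³ be a unit vector and s ∈ ℝ, and let L = {x ∈ ℝ³ : ⟨x, ν⟩ > s} be an open half-space. Suppose that for every ℓ ∈ {1, …, n} the rotation ψ_{ℓπ/n} by angle π around the horizontal axis ξ_{ℓπ/n} maps L onto either L or ℝ³ \ L up to a Lebesgue null set. Then s = 0, and: if n ≥ 3 then ν = (0,0,1) or ν = (0,0,−1); if n = 2 then ν ∈ {±(1,0,0), ±(0,1,0), ±(0,0,1)}. In particular, for n ≥ 3 the only such equivariant half-spaces are the open upper and lower half-spaces. -/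

import Mathlib

open MeasureTheory
open scoped symmDiff RealInnerProductSpace

/-- The rotation by angle `π` around the horizontal axis
`ξ_θ = {(r cos θ, r sin θ, 0) : r ∈ ℝ}`:
`ψ_θ(x₁, x₂, x₃) = (x₁ cos 2θ + x₂ sin 2θ, x₁ sin 2θ − x₂ cos 2θ, −x₃)`. -/
noncomputable def psiRot (θ : ℝ) (x : EuclideanSpace ℝ (Fin 3)) :
    EuclideanSpace ℝ (Fin 3) :=
  (WithLp.equiv 2 (Fin 3 → ℝ)).symm
    ![x 0 * Real.cos (2 * θ) + x 1 * Real.sin (2 * θ),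
      x 0 * Real.sin (2 * θ) - x 1 * Real.cos (2 * θ),
      -x 2]

/-- Standard basis vectors of `ℝ³`. -/
noncomputable def e₁ : EuclideanSpace ℝ (Fin 3) := (WithLp.equiv 2 (Fin 3 → ℝ)).symm ![1, 0, 0]
noncomputable def e₂ : EuclideanSpace ℝ (Fin 3) := (WithLp.equiv 2 (Fin 3 → ℝ)).symm ![0, 1, 0]
noncomputable def e₃ : EuclideanSpace ℝ (Fin 3) := (WithLp.equiv 2 (Fin 3 → ℝ)).symm ![0, 0, 1]

/-! ### Auxiliary lemmas -/

local notation "E3" => EuclideanSpace ℝ (Fin 3)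

lemma psiRot_apply0 (θ : ℝ) (x : E3) :
    psiRot θ x 0 = x 0 * Real.cos (2 * θ) + x 1 * Real.sin (2 * θ) := rfl
lemma psiRot_apply1 (θ : ℝ) (x : E3) :
    psiRot θ x 1 = x 0 * Real.sin (2 * θ) - x 1 * Real.cos (2 * θ) := rfl
lemma psiRot_apply2 (θ : ℝ) (x : E3) :
    psiRot θ x 2 = -x 2 := rfl

lemma inner3 (x y : E3) :
    ⟪x, y⟫ = x 0 * y 0 + x 1 * y 1 + x 2 * y 2 := by
  simp [PiLp.inner_apply, Fin.sum_univ_three, mul_comm]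

lemma psiRot_invol (θ : ℝ) (x : E3) :
    psiRot θ (psiRot θ x) = x := by
  have h := Real.sin_sq_add_cos_sq (2 * θ)
  ext i
  fin_cases i
  · show psiRot θ (psiRot θ x) 0 = x 0
    simp only [psiRot_apply0, psiRot_apply1, psiRot_apply2]; linear_combination x 0 * h
  · show psiRot θ (psiRot θ x) 1 = x 1
    simp only [psiRot_apply0, psiRot_apply1, psiRot_apply2]; linear_combination x 1 * h
  · show psiRot θ (psiRot θ x) 2 = x 2
    simp only [psiRot_apply0, psiRot_apply1, psiRot_apply2]; ring

lemma inner_psiRot (θ : ℝ) (x y : E3) :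
    ⟪psiRot θ x, y⟫ = ⟪x, psiRot θ y⟫ := by
  simp only [inner3, psiRot_apply0, psiRot_apply1, psiRot_apply2]; ring

lemma norm_psiRot (θ : ℝ) (x : E3) :
    ‖psiRot θ x‖ = ‖x‖ := by
  have h1 : ⟪psiRot θ x, psiRot θ x⟫ = ⟪x, x⟫ := by
    rw [inner_psiRot, psiRot_invol]
  rw [← Real.sqrt_sq (norm_nonneg (psiRot θ x)), ← Real.sqrt_sq (norm_nonneg x),
    ← real_inner_self_eq_norm_sq, ← real_inner_self_eq_norm_sq, h1]

lemma hyperplane_null (a : E3) (ha : a ≠ 0) (s : ℝ) :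
    volume {x : E3 | ⟪x, a⟫ = s} = 0 := by
  obtain ⟨x₀, hx₀⟩ : ∃ x₀ : E3, ⟪x₀, a⟫ = s := by
    refine ⟨(s / ⟪a, a⟫) • a, ?_⟩
    rw [real_inner_smul_left, div_mul_cancel₀ _ (inner_self_ne_zero.mpr ha)]
  set K : Submodule ℝ E3 := LinearMap.ker ((innerSL ℝ a).toLinearMap) with hK
  have hKne : K ≠ ⊤ := by
    intro htop
    have : ⟪a, a⟫ = 0 := by
      have : a ∈ K := htop ▸ Submodule.mem_top
      simpa [hK, LinearMap.mem_ker] using this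
    exact (inner_self_ne_zero.mpr ha) this
  have heq : {x : E3 | ⟪x, a⟫ = s} = (fun y => y + (-x₀)) ⁻¹' (K : Set E3) := by
    ext x
    simp only [Set.mem_setOf_eq, Set.mem_preimage, SetLike.mem_coe, hK, LinearMap.mem_ker,
      ContinuousLinearMap.coe_coe, innerSL_apply_apply, inner_add_right, inner_neg_right]
    rw [real_inner_comm a x₀] at hx₀
    rw [real_inner_comm a x, hx₀]
    constructor <;> intro h <;> linarith
  rw [heq, measure_preimage_add_right]
  exact Measure.addHaar_submodule volume K hKne

lemma cont_inner (a : E3) : Continuous fun x : E3 => ⟪x, a⟫ :=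
  Continuous.inner continuous_id continuous_const

lemma open_slab (a b : E3) (u v : ℝ) :
    IsOpen {x : E3 | u < ⟪x, a⟫ ∧ ⟪x, b⟫ < v} :=
  (isOpen_lt continuous_const (cont_inner a)).inter (isOpen_lt (cont_inner b) continuous_const)

lemma exists_inner_two (a b : E3) (ha : ‖a‖ = 1) (hb : ‖b‖ = 1)
    (hab : a ≠ b) (hab' : a ≠ -b) (u v : ℝ) :
    ∃ x : E3, ⟪x, a⟫ = u ∧ ⟪x, b⟫ = v := by
  set c : ℝ := ⟪a, b⟫ with hc
  have hc1 : c < 1 := (inner_lt_one_iff_real_of_norm_eq_one ha hb).mpr hab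
  have hc2 : -c < 1 := by
    have : ⟪a, -b⟫ < 1 := (inner_lt_one_iff_real_of_norm_eq_one ha (by simpa using hb)).mpr hab'
    simpa [inner_neg_right] using this
  have hd : 1 - c ^ 2 ≠ 0 := by nlinarith
  refine ⟨((u - c * v) / (1 - c ^ 2)) • a + ((v - c * u) / (1 - c ^ 2)) • b, ?_, ?_⟩
  · rw [inner_add_left, real_inner_smul_left, real_inner_smul_left,
      real_inner_self_eq_norm_sq, ha, real_inner_comm a b, ← hc]
    field_simp
    ring
  · rw [inner_add_left, real_inner_smul_left, real_inner_smul_left,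
      real_inner_self_eq_norm_sq, hb, ← hc]
    field_simp
    ring

lemma halfspace_symmdiff (a b : E3) (ha : ‖a‖ = 1) (hb : ‖b‖ = 1) (s t : ℝ)
    (h : volume ({x : E3 | s < ⟪x, a⟫} ∆ {x : E3 | t < ⟪x, b⟫}) = 0) :
    a = b ∧ s = t := by
  have key : ∀ x : E3, s < ⟪x, a⟫ → ⟪x, b⟫ < t → False := by
    intro x hx1 hx2
    set U : Set E3 := {x : E3 | s < ⟪x, a⟫ ∧ ⟪x, b⟫ < t} with hU
    have hUo : IsOpen U := open_slab a b s t
    have hUsub : U ⊆ {x : E3 | s < ⟪x, a⟫} ∆ {x : E3 | t < ⟪x, b⟫} := by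
      rw [Set.symmDiff_def]
      intro y hy
      exact Or.inl ⟨hy.1, not_lt.mpr hy.2.le⟩
    have : volume U = 0 := measure_mono_null hUsub h
    exact absurd this (hUo.measure_pos volume ⟨x, hx1, hx2⟩).ne'
  have key' : ∀ x : E3, t < ⟪x, b⟫ → ⟪x, a⟫ < s → False := by
    intro x hx1 hx2
    set U : Set E3 := {x : E3 | t < ⟪x, b⟫ ∧ ⟪x, a⟫ < s} with hU
    have hUo : IsOpen U := open_slab b a t s
    have hUsub : U ⊆ {x : E3 | s < ⟪x, a⟫} ∆ {x : E3 | t < ⟪x, b⟫} := by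
      rw [Set.symmDiff_def]
      intro y hy
      exact Or.inr ⟨hy.1, not_lt.mpr hy.2.le⟩
    have : volume U = 0 := measure_mono_null hUsub h
    exact absurd this (hUo.measure_pos volume ⟨x, hx1, hx2⟩).ne'
  have hab : a = b := by
    by_contra hne
    rcases eq_or_ne a (-b) with he | hne'
    · obtain ⟨x, hx1, hx2⟩ : ∃ x : E3, ⟪x, a⟫ = max s (-t) + 1 ∧ ⟪x, b⟫ = -(max s (-t) + 1) := by
        refine ⟨(max s (-t) + 1) • a, ?_, ?_⟩
        · rw [real_inner_smul_left, real_inner_self_eq_norm_sq, ha]; ring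
        · rw [real_inner_smul_left, he, inner_neg_left,
            real_inner_self_eq_norm_sq, hb]; ring
      refine key x ?_ ?_
      · rw [hx1]; exact lt_of_le_of_lt (le_max_left _ _) (lt_add_one _)
      · rw [hx2]
        have : -t ≤ max s (-t) := le_max_right _ _
        linarith
    · obtain ⟨x, hx1, hx2⟩ := exists_inner_two a b ha hb hne hne' (s + 1) (t - 1)
      exact key x (by rw [hx1]; linarith) (by rw [hx2]; linarith)
  subst hab
  have hst : s = t := by
    rcases lt_trichotomy s t with hlt | heq | hgt
    · obtain ⟨x, hx⟩ : ∃ x : E3, ⟪x, a⟫ = (s + t) / 2 := by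
        refine ⟨((s + t) / 2) • a, ?_⟩
        rw [real_inner_smul_left, real_inner_self_eq_norm_sq, ha]; ring
      exact absurd (key x (by rw [hx]; linarith) (by rw [hx]; linarith)) (by simp)
    · exact heq
    · obtain ⟨x, hx⟩ : ∃ x : E3, ⟪x, a⟫ = (s + t) / 2 := by
        refine ⟨((s + t) / 2) • a, ?_⟩
        rw [real_inner_smul_left, real_inner_self_eq_norm_sq, ha]; ring
      exact absurd (key' x (by rw [hx]; linarith) (by rw [hx]; linarith)) (by simp)
  exact ⟨rfl, hst⟩

lemma psiRot_image (θ : ℝ) (ν : E3) (s : ℝ) :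
    psiRot θ '' {x : E3 | s < ⟪x, ν⟫} = {x : E3 | s < ⟪x, psiRot θ ν⟫} := by
  ext x
  constructor
  · rintro ⟨y, hy, rfl⟩
    show s < ⟪psiRot θ y, psiRot θ ν⟫
    rw [inner_psiRot, psiRot_invol]
    exact hy
  · intro hx
    refine ⟨psiRot θ x, ?_, psiRot_invol θ x⟩
    show s < ⟪psiRot θ x, ν⟫
    rw [inner_psiRot]
    exact hx

lemma dichot (θ : ℝ) (ν : E3) (hν : ‖ν‖ = 1) (s : ℝ)
    (h : volume ((psiRot θ '' {x : E3 | s < ⟪x, ν⟫}) ∆ {x : E3 | s < ⟪x, ν⟫}) = 0 ∨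
         volume ((psiRot θ '' {x : E3 | s < ⟪x, ν⟫}) ∆ {x : E3 | s < ⟪x, ν⟫}ᶜ) = 0) :
    psiRot θ ν = ν ∨ (psiRot θ ν = -ν ∧ s = 0) := by
  have hnθ : ‖psiRot θ ν‖ = 1 := by rw [norm_psiRot]; exact hν
  rw [psiRot_image] at h
  rcases h with h | h
  · exact Or.inl (halfspace_symmdiff _ _ hnθ hν s s h).1
  · right
    have hν0 : ν ≠ 0 := by intro h0; rw [h0] at hν; simp at hν
    have hsub : ({x : E3 | s < ⟪x, ν⟫}ᶜ ∆ {x : E3 | -s < ⟪x, -ν⟫}) ⊆ {x : E3 | ⟪x, ν⟫ = s} := by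
      intro x hx
      rw [Set.symmDiff_def] at hx
      rcases hx with ⟨hx1, hx2⟩ | ⟨hx1, hx2⟩
      · simp only [Set.mem_compl_iff, Set.mem_setOf_eq, not_lt, inner_neg_right] at hx1 hx2
        exact le_antisymm hx1 (by linarith)
      · simp only [Set.mem_compl_iff, Set.mem_setOf_eq, not_lt, not_not,
          inner_neg_right] at hx1 hx2
        exfalso; linarith
    have h2 : volume ({x : E3 | s < ⟪x, psiRot θ ν⟫} ∆ {x : E3 | -s < ⟪x, -ν⟫}) = 0 := by
      refine measure_mono_null (symmDiff_triangle _ ({x : E3 | s < ⟪x, ν⟫}ᶜ) _) ?_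
      exact measure_union_null h (measure_mono_null hsub (hyperplane_null ν hν0 s))
    obtain ⟨h3, h4⟩ := halfspace_symmdiff _ _ hnθ (by rw [norm_neg]; exact hν) s (-s) h2
    exact ⟨h3, by linarith⟩

lemma comp_eqs {θ : ℝ} {ν : E3} (h : psiRot θ ν = ν) :
    ν 0 * Real.cos (2 * θ) + ν 1 * Real.sin (2 * θ) = ν 0 ∧
    ν 0 * Real.sin (2 * θ) - ν 1 * Real.cos (2 * θ) = ν 1 ∧
    -ν 2 = ν 2 := ⟨congrArg (fun v : E3 => v 0) h, congrArg (fun v : E3 => v 1) h,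
      congrArg (fun v : E3 => v 2) h⟩

lemma comp_eqs_neg {θ : ℝ} {ν : E3} (h : psiRot θ ν = -ν) :
    ν 0 * Real.cos (2 * θ) + ν 1 * Real.sin (2 * θ) = -ν 0 ∧
    ν 0 * Real.sin (2 * θ) - ν 1 * Real.cos (2 * θ) = -ν 1 ∧
    -ν 2 = -ν 2 := ⟨congrArg (fun v : E3 => v 0) h, congrArg (fun v : E3 => v 1) h,
      congrArg (fun v : E3 => v 2) h⟩

lemma vec_eq (v : E3) (x y z : ℝ) (h0 : v 0 = x) (h1 : v 1 = y) (h2 : v 2 = z) :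
    v = (WithLp.equiv 2 (Fin 3 → ℝ)).symm ![x, y, z] := by
  ext i
  fin_cases i
  · exact h0
  · exact h1
  · exact h2

lemma neg_vec (x y z : ℝ) :
    -((WithLp.equiv 2 (Fin 3 → ℝ)).symm ![x, y, z] : E3)
      = (WithLp.equiv 2 (Fin 3 → ℝ)).symm ![-x, -y, -z] := by
  ext i
  fin_cases i <;> rfl

lemma eq_neg_vec (v : E3) (x y z : ℝ) (h0 : v 0 = -x) (h1 : v 1 = -y) (h2 : v 2 = -z) :
    v = -((WithLp.equiv 2 (Fin 3 → ℝ)).symm ![x, y, z] : E3) := by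
  rw [neg_vec]; exact vec_eq v _ _ _ h0 h1 h2

set_option maxHeartbeats 2000000 in
/-- Classification of `D_n`-equivariant half-spaces: let `n ≥ 2`, let `ν ∈ ℝ³` be
a unit vector, `s ∈ ℝ`, and `L = {x : ⟨x, ν⟩ > s}`.  If for every `ℓ ∈ {1, …, n}`
the rotation `ψ_{ℓπ/n}` by angle `π` around the axis `ξ_{ℓπ/n}` maps `L` onto `L`
or `ℝ³ \ L` up to a Lebesgue null set, then `s = 0`; if moreover `n ≥ 3` then
`ν = ±(0,0,1)`, and if `n = 2` then `ν ∈ {±(1,0,0), ±(0,1,0), ±(0,0,1)}`. -/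
theorem equivariant_halfspace_classification
    (n : ℕ) (hn : 2 ≤ n) (ν : EuclideanSpace ℝ (Fin 3)) (hν : ‖ν‖ = 1) (s : ℝ)
    (L : Set (EuclideanSpace ℝ (Fin 3)))
    (hL : L = {x : EuclideanSpace ℝ (Fin 3) | s < ⟪x, ν⟫})
    (heq : ∀ ℓ : ℕ, 1 ≤ ℓ → ℓ ≤ n →
      volume ((psiRot (ℓ * Real.pi / n) '' L) ∆ L) = 0 ∨
      volume ((psiRot (ℓ * Real.pi / n) '' L) ∆ Lᶜ) = 0) :
    s = 0 ∧
    (3 ≤ n → ν = e₃ ∨ ν = -e₃) ∧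
    (n = 2 → ν = e₁ ∨ ν = -e₁ ∨ ν = e₂ ∨ ν = -e₂ ∨ ν = e₃ ∨ ν = -e₃) := by
  subst hL
  have hπ := Real.pi_pos
  have hn0 : (n : ℝ) ≠ 0 := Nat.cast_ne_zero.mpr (by omega)
  have hn2 : (2 : ℝ) ≤ (n : ℝ) := by exact_mod_cast hn
  have D : ∀ ℓ : ℕ, 1 ≤ ℓ → ℓ ≤ n →
      psiRot (ℓ * Real.pi / n) ν = ν ∨ (psiRot (ℓ * Real.pi / n) ν = -ν ∧ s = 0) :=
    fun ℓ h1 h2 => dichot _ ν hν s (heq ℓ h1 h2)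
  have hnorm : ν 0 ^ 2 + ν 1 ^ 2 + ν 2 ^ 2 = 1 := by
    have h1 : ⟪ν, ν⟫ = 1 := by rw [real_inner_self_eq_norm_sq, hν]; norm_num
    rw [inner3] at h1; nlinarith [h1]
  have hθn : ((n : ℕ) : ℝ) * Real.pi / n = Real.pi := by field_simp
  have Dn := D n (by omega) le_rfl
  rw [hθn] at Dn
  have hθ1 : ((1 : ℕ) : ℝ) * Real.pi / n = Real.pi / n := by norm_num
  have D1 := D 1 le_rfl (by omega)
  rw [hθ1] at D1
  have hc2π : Real.cos (2 * Real.pi) = 1 := Real.cos_two_pi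
  have hs2π : Real.sin (2 * Real.pi) = 0 := Real.sin_two_pi
  have hα : (0 : ℝ) < 2 * (Real.pi / n) := by positivity
  have hnpos : (0:ℝ) < (n:ℝ) := by positivity
  have hαle : 2 * (Real.pi / n) ≤ Real.pi := by
    rw [mul_div_assoc', div_le_iff₀ hnpos]
    nlinarith
  have hcα : Real.cos (2 * (Real.pi / n)) < 1 := by
    have := Real.cos_lt_cos_of_nonneg_of_le_pi (le_refl 0) hαle hα
    rwa [Real.cos_zero] at this
  -- Part 1 : s = 0
  have hs0 : s = 0 := by
    by_contra hs
    have En : psiRot Real.pi ν = ν := by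
      rcases Dn with h | h
      · exact h
      · exact absurd h.2 hs
    have E1 : psiRot (Real.pi / n) ν = ν := by
      rcases D1 with h | h
      · exact h
      · exact absurd h.2 hs
    obtain ⟨a1, a2, a3⟩ := comp_eqs En
    obtain ⟨b1, b2, b3⟩ := comp_eqs E1
    rw [hc2π, hs2π] at a1 a2
    have hb : ν 1 = 0 := by linarith
    have hd : ν 2 = 0 := by linarith
    have ha2 : ν 0 ^ 2 = 1 := by nlinarith
    have hane : ν 0 ≠ 0 := by intro h; rw [h] at ha2; norm_num at ha2
    have hcc : ν 0 * Real.cos (2 * (Real.pi / n)) = ν 0 * 1 := by rw [hb] at b1; linarith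
    have := mul_left_cancel₀ hane hcc
    linarith
  refine ⟨hs0, ?_, ?_⟩
  · -- Part 2 : n ≥ 3
    intro h3
    have hαlt : 2 * (Real.pi / n) < Real.pi := by
      have h3' : (3 : ℝ) ≤ (n : ℝ) := by exact_mod_cast h3
      rw [mul_div_assoc', div_lt_iff₀ hnpos]
      nlinarith
    have hsα : 0 < Real.sin (2 * (Real.pi / n)) := Real.sin_pos_of_pos_of_lt_pi hα hαlt
    have ha0 : ν 0 = 0 := by
      rcases Dn with h | ⟨h, _⟩
      · obtain ⟨a1, a2, a3⟩ := comp_eqs h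
        rw [hc2π, hs2π] at a1 a2
        have hb : ν 1 = 0 := by linarith
        have hA : ν 0 * Real.sin (2 * (Real.pi / n)) = 0 := by
          rcases D1 with g | ⟨g, _⟩
          · obtain ⟨b1, b2, b3⟩ := comp_eqs g
            rw [hb] at b2; linarith
          · obtain ⟨b1, b2, b3⟩ := comp_eqs_neg g
            rw [hb] at b2; linarith
        rcases mul_eq_zero.mp hA with h0 | h0
        · exact h0
        · exact absurd h0 hsα.ne'
      · obtain ⟨a1, a2, a3⟩ := comp_eqs_neg h
        rw [hc2π, hs2π] at a1
        linarith
    have hb0 : ν 1 = 0 := by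
      rcases D1 with g | ⟨g, _⟩
      · obtain ⟨b1, b2, b3⟩ := comp_eqs g
        rw [ha0] at b1
        have hB : ν 1 * Real.sin (2 * (Real.pi / n)) = 0 := by linarith
        rcases mul_eq_zero.mp hB with h0 | h0
        · exact h0
        · exact absurd h0 hsα.ne'
      · obtain ⟨b1, b2, b3⟩ := comp_eqs_neg g
        rw [ha0] at b2
        have hB : ν 1 * (1 - Real.cos (2 * (Real.pi / n))) = 0 := by linarith
        rcases mul_eq_zero.mp hB with h0 | h0
        · exact h0
        · exact absurd h0 (by linarith)
    have hd2 : ν 2 ^ 2 = 1 := by nlinarith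
    have : (ν 2 - 1) * (ν 2 + 1) = 0 := by nlinarith
    rcases mul_eq_zero.mp this with h0 | h0
    · left; exact vec_eq ν 0 0 1 ha0 hb0 (by linarith)
    · right
      exact eq_neg_vec ν 0 0 1 (by rw [ha0]; ring) (by rw [hb0]; ring) (by linarith)
  · -- Part 3 : n = 2
    intro h2
    subst h2
    have hc1 : ((1 : ℕ) : ℝ) = 1 := by norm_num
    have hθhalf : Real.pi / ((2:ℕ) : ℝ) = Real.pi / 2 := by norm_num
    rw [hθhalf] at D1
    have hαπ : 2 * (Real.pi / 2) = Real.pi := by ring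
    have hcπ : Real.cos Real.pi = -1 := Real.cos_pi
    have hsπ : Real.sin Real.pi = 0 := Real.sin_pi
    rcases D1 with g | ⟨g, _⟩
    · -- ψ_{π/2} ν = ν : ν = ±e₂
      obtain ⟨b1, b2, b3⟩ := comp_eqs g
      rw [hαπ, hcπ, hsπ] at b1 b2
      have ha0 : ν 0 = 0 := by linarith
      have hd0 : ν 2 = 0 := by linarith
      have hb2 : (ν 1 - 1) * (ν 1 + 1) = 0 := by nlinarith
      rcases mul_eq_zero.mp hb2 with h0 | h0
      · exact Or.inr (Or.inr (Or.inl (vec_eq ν 0 1 0 ha0 (by linarith) hd0)))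
      · refine Or.inr (Or.inr (Or.inr (Or.inl ?_)))
        exact eq_neg_vec ν 0 1 0 (by rw [ha0]; ring) (by linarith) (by rw [hd0]; ring)
    · -- ψ_{π/2} ν = -ν : ν 1 = 0
      obtain ⟨b1, b2, b3⟩ := comp_eqs_neg g
      rw [hαπ, hcπ, hsπ] at b1 b2
      have hb0 : ν 1 = 0 := by linarith
      rcases Dn with h | ⟨h, _⟩
      · -- ψ_π ν = ν : ν = ±e₁
        obtain ⟨a1, a2, a3⟩ := comp_eqs h
        rw [hc2π, hs2π] at a1 a2
        have hd0 : ν 2 = 0 := by linarith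
        have ha2 : (ν 0 - 1) * (ν 0 + 1) = 0 := by nlinarith
        rcases mul_eq_zero.mp ha2 with h0 | h0
        · exact Or.inl (vec_eq ν 1 0 0 (by linarith) hb0 hd0)
        · refine Or.inr (Or.inl ?_)
          exact eq_neg_vec ν 1 0 0 (by linarith) (by rw [hb0]; ring) (by rw [hd0]; ring)
      · -- ψ_π ν = -ν : ν = ±e₃
        obtain ⟨a1, a2, a3⟩ := comp_eqs_neg h
        rw [hc2π, hs2π] at a1
        have ha0 : ν 0 = 0 := by linarith
        have hd2 : (ν 2 - 1) * (ν 2 + 1) = 0 := by nlinarith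
        rcases mul_eq_zero.mp hd2 with h0 | h0
        · exact Or.inr (Or.inr (Or.inr (Or.inr (Or.inl (vec_eq ν 0 0 1 ha0 hb0 (by linarith))))))
        · refine Or.inr (Or.inr (Or.inr (Or.inr (Or.inr ?_))))
          exact eq_neg_vec ν 0 0 1 (by rw [ha0]; ring) (by rw [hb0]; ring) (by linarith)
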